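/- arXiv:1908.00783 — 6 statements merged into one kernel-verified Lean document; each statement's English description precedes it below -/
import Mathlib

section
/- Let a > b > 0 and consider the triangle with vertices g, e, k where |ge|² = (a²+b²)(a²-b²)²/(a²b²), |gk| = (a-b)(b+2a)/(2b), |ek| = (a-b)(a+2b)/(2a). Then the angle α' at vertex g satisfies cos(α') = (2a² + ab + b²)/((b + 2a)√(a² + b²)). -/
open Real

theorem stmt_4 (a b : ℝ) (hb : 0 < b) (hab : b < a)
    (ge gk ek : ℝ)
    (hge : ge = Real.sqrt ((a^2 + b^2) * (a^2 - b^2)^2 / (a^2 * b^2)))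
    (hgk : gk = (a - b) * (b + 2*a) / (2*b))
    (hek : ek = (a - b) * (a + 2*b) / (2*a)) :
    (ge^2 + gk^2 - ek^2) / (2 * ge * gk) =
      (2*a^2 + a*b + b^2) / ((b + 2*a) * Real.sqrt (a^2 + b^2)) := by
  have ha : 0 < a := hb.trans hab
  have h2 : (0:ℝ) < a^2 - b^2 := by nlinarith
  have h3 : (0:ℝ) < a - b := by linarith
  set s := Real.sqrt (a^2 + b^2) with hsdef
  have hs0 : 0 < s := Real.sqrt_pos.mpr (by positivity)
  have hs : s^2 = a^2 + b^2 := Real.sq_sqrt (by positivity)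
  have hge' : ge = (a^2 - b^2) * s / (a*b) := by
    rw [hge]
    have h : (a^2 + b^2) * (a^2 - b^2)^2 / (a^2 * b^2) = ((a^2 - b^2) * s / (a*b))^2 := by
      field_simp
      linear_combination (-1)*hs
    rw [h, Real.sqrt_sq (le_of_lt (div_pos (mul_pos h2 hs0) (by positivity)))]
  have hgep : 0 < (a^2 - b^2) * s / (a*b) := div_pos (mul_pos h2 hs0) (by positivity)
  have hgkp : 0 < (a - b) * (b + 2*a) / (2*b) := div_pos (by positivity) (by positivity)
  subst hge' hgk hek
  rw [div_eq_div_iff (ne_of_gt (mul_pos (mul_pos two_pos hgep) hgkp)) (by positivity)]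
  field_simp
  linear_combination (4*(a^2-b^2)^2) * hs
end

section
/- For a > b > 0, let sin(θ) = b/√(a²+b²), cos(θ) = a/√(a²+b²), cos(α') = (2a² + ab + b²)/((b+2a)√(a²+b²)), sin(α') = (b/(2a+b))√(2ab/(a²+b²)). Then sin(θ)cos(α') - cos(θ)sin(α') = (b/(2a+b))·(2a + b + √(2ab))/(a + b + √(2ab)). -/
theorem stmt_8 (a b : ℝ) (hb : 0 < b) (hab : b < a) :
    (b / Real.sqrt (a^2 + b^2)) *
        ((2*a^2 + a*b + b^2) / ((b + 2*a) * Real.sqrt (a^2 + b^2))) -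
      (a / Real.sqrt (a^2 + b^2)) *
        ((b / (2*a + b)) * Real.sqrt (2*a*b / (a^2 + b^2))) =
    (b / (2*a + b)) * (2*a + b + Real.sqrt (2*a*b)) / (a + b + Real.sqrt (2*a*b)) := by
  have ha : 0 < a := hb.trans hab
  have hs2 : (0:ℝ) < a^2 + b^2 := by positivity
  have hr2 : (0:ℝ) < 2*a*b := by positivity
  set s := Real.sqrt (a^2 + b^2) with hsdef
  set r := Real.sqrt (2*a*b) with hrdef
  have hs : 0 < s := Real.sqrt_pos.mpr hs2
  have hr : 0 < r := Real.sqrt_pos.mpr hr2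
  have hss : s^2 = a^2 + b^2 := Real.sq_sqrt hs2.le
  have hrr : r^2 = 2*a*b := Real.sq_sqrt hr2.le
  have hdiv : Real.sqrt (2*a*b / (a^2 + b^2)) = r / s := by
    rw [Real.sqrt_div hr2.le]
  rw [hdiv]
  have h1 : b + 2*a ≠ 0 := by positivity
  have h2 : 2*a + b ≠ 0 := by positivity
  have h3 : a + b + r ≠ 0 := by positivity
  field_simp
  linear_combination (-(2*a+b)*(2*a+b+r)) * hss
    + (-a*(2*a+b)) * hrr
end

section
/- For a > b > 0, in the triangle (g,e,k) with |gk| = (a-b)(b+2a)/(2b), |ek| = (a-b)(a+2b)/(2a), and sin(α') = (b/(2a+b))√(2ab/(a²+b²)), the law of sines gives sin(α) = (|gk|/|ek|)·sin(α') = (a/(a+2b))·√(2ab/(a²+b²)). -/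
theorem stmt_9 (a b : ℝ) (hb : 0 < b) (hab : b < a) :
    ((a - b) * (b + 2*a) / (2*b)) / ((a - b) * (a + 2*b) / (2*a)) *
        ((b / (2*a + b)) * Real.sqrt (2*a*b / (a^2 + b^2))) =
      (a / (a + 2*b)) * Real.sqrt (2*a*b / (a^2 + b^2)) := by
  have ha : 0 < a := hb.trans hab
  have h1 : a - b ≠ 0 := by nlinarith
  have : ((a - b) * (b + 2*a) / (2*b)) / ((a - b) * (a + 2*b) / (2*a)) *
      (b / (2*a + b)) = a / (a + 2*b) := by
    field_simp
    ring
  rw [← mul_assoc, this]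
end

section
/- For a > b > 0, the law of sines in the triangle (g,e,k) gives sin(β) = (|ge|/|ek|)·sin(α') = 2(a + b)√(2ab)/((a + 2b)(2a + b)), where |ge| = (a² - b²)√(a² + b²)/(ab), |ek| = (a-b)(a+2b)/(2a), and sin(α') = (b/(2a+b))√(2ab/(a²+b²)). -/
theorem stmt_11 (a b : ℝ) (hb : 0 < b) (hab : b < a) :
    ((a^2 - b^2) * Real.sqrt (a^2 + b^2) / (a*b)) / ((a - b) * (a + 2*b) / (2*a)) *
        ((b / (2*a + b)) * Real.sqrt (2*a*b / (a^2 + b^2))) =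
      2 * (a + b) * Real.sqrt (2*a*b) / ((a + 2*b) * (2*a + b)) := by
  have ha : 0 < a := hb.trans hab
  have hs : (0:ℝ) < a^2 + b^2 := by positivity
  have h1 : Real.sqrt (2*a*b / (a^2 + b^2)) = Real.sqrt (2*a*b) / Real.sqrt (a^2+b^2) :=
    Real.sqrt_div (by positivity) _
  have hsne : Real.sqrt (a^2+b^2) ≠ 0 := by positivity
  rw [h1]
  generalize Real.sqrt (a^2+b^2) = t at hsne ⊢
  generalize Real.sqrt (2*a*b) = s
  have h2 : a - b ≠ 0 := by linarith
  have h3 : a + 2*b ≠ 0 := by linarith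
  have h4 : 2*a + b ≠ 0 := by linarith
  field_simp
  ring
end

section
/- Define the oval perimeter O(a,b) = 4[γ·(a²/b) + β·(a+b)/2 + δ·(b²/a)], where γ = arcsin((b/(2a+b))·(2a+b+√(2ab))/(a+b+√(2ab))), β = arcsin(2(a+b)√(2ab)/((a+2b)(2a+b))), δ = arcsin((a/(a+2b))·(a+2b+√(2ab))/(a+b+√(2ab))). Then for a = b = ρ > 0, O(ρ,ρ) = 2πρ. -/
open Real

noncomputable def ovalPerimeter (a b : ℝ) : ℝ :=
  4 * (Real.arcsin ((b / (2*a + b)) * (2*a + b + Real.sqrt (2*a*b)) /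
          (a + b + Real.sqrt (2*a*b))) * (a^2 / b) +
       Real.arcsin (2 * (a + b) * Real.sqrt (2*a*b) / ((a + 2*b) * (2*a + b))) *
          ((a + b) / 2) +
       Real.arcsin ((a / (a + 2*b)) * (a + 2*b + Real.sqrt (2*a*b)) /
          (a + b + Real.sqrt (2*a*b))) * (b^2 / a))

theorem stmt_18 (ρ : ℝ) (hρ : 0 < ρ) : ovalPerimeter ρ ρ = 2 * π * ρ := by
  have hs2 : Real.sqrt 2 ^ 2 = 2 := Real.sq_sqrt (by norm_num)
  have hs2nn : (0:ℝ) ≤ Real.sqrt 2 := Real.sqrt_nonneg 2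
  have hs2lt : Real.sqrt 2 < 2 := by nlinarith
  have hs2gt : 1 < Real.sqrt 2 := by nlinarith
  have h2 : Real.sqrt (2*ρ*ρ) = Real.sqrt 2 * ρ := by
    rw [show (2*ρ*ρ) = 2 * ρ^2 by ring, Real.sqrt_mul (by norm_num), Real.sqrt_sq hρ.le]
  set g : ℝ := (4 - Real.sqrt 2) / 6 with hg
  have hρ' : ρ ≠ 0 := hρ.ne'
  have e1 : (ρ / (2*ρ + ρ)) * (2*ρ + ρ + Real.sqrt (2*ρ*ρ)) /
      (ρ + ρ + Real.sqrt (2*ρ*ρ)) = g := by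
    rw [h2, hg]
    have hden2 : ρ + ρ + Real.sqrt 2 * ρ ≠ 0 := by positivity
    field_simp
    nlinarith [hs2, sq_nonneg ρ, hρ]
  have e3 : (ρ / (ρ + 2*ρ)) * (ρ + 2*ρ + Real.sqrt (2*ρ*ρ)) /
      (ρ + ρ + Real.sqrt (2*ρ*ρ)) = g := by
    rw [h2, hg]
    have hden2 : ρ + ρ + Real.sqrt 2 * ρ ≠ 0 := by positivity
    field_simp
    nlinarith [hs2, sq_nonneg ρ, hρ]
  have e2 : 2 * (ρ + ρ) * Real.sqrt (2*ρ*ρ) / ((ρ + 2*ρ) * (2*ρ + ρ)) =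
      4 * Real.sqrt 2 / 9 := by
    rw [h2]; field_simp; ring
  have hg0 : 0 ≤ g := by rw [hg]; nlinarith
  have hg1 : g ≤ 1 := by rw [hg]; nlinarith
  have hγ0 : 0 ≤ Real.arcsin g := Real.arcsin_nonneg.2 hg0
  have hγ2 : Real.arcsin g ≤ π / 2 := Real.arcsin_le_pi_div_two g
  have key : Real.arcsin (4 * Real.sqrt 2 / 9) = π / 2 - 2 * Real.arcsin g := by
    apply Real.arcsin_eq_of_sin_eq
    · rw [Real.sin_pi_div_two_sub, Real.cos_two_mul',
        Real.sin_arcsin (by linarith) hg1, Real.cos_arcsin,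
        Real.sq_sqrt (by nlinarith : (0:ℝ) ≤ 1 - g^2), hg]
      nlinarith [hs2]
    · constructor <;> simp <;> linarith
  rw [ovalPerimeter, e1, e2, e3, key]
  field_simp
  ring
end

section
/- For a > b > 0, the three central angles of the quarter oval sum to a right angle: arcsin(sin γ) + arcsin(sin β) + arcsin(sin δ) = π/2, where sin γ = (b/(2a+b))·(2a+b+√(2ab))/(a+b+√(2ab)), sin β = 2(a+b)√(2ab)/((a+2b)(2a+b)), sin δ = (a/(a+2b))·(a+2b+√(2ab))/(a+b+√(2ab)). -/
open Real

theorem stmt_19 (a b : ℝ) (hb : 0 < b) (hab : b < a) :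
    Real.arcsin ((b / (2*a + b)) * (2*a + b + Real.sqrt (2*a*b)) /
        (a + b + Real.sqrt (2*a*b))) +
      Real.arcsin (2 * (a + b) * Real.sqrt (2*a*b) / ((a + 2*b) * (2*a + b))) +
      Real.arcsin ((a / (a + 2*b)) * (a + 2*b + Real.sqrt (2*a*b)) /
        (a + b + Real.sqrt (2*a*b))) = π / 2 := by
  have ha : 0 < a := hb.trans hab
  set s : ℝ := Real.sqrt (2*a*b) with hs
  have hs0 : 0 ≤ s := Real.sqrt_nonneg _
  have hs2 : s ^ 2 = 2 * a * b := Real.sq_sqrt (by positivity)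
  set x : ℝ := (b / (2*a + b)) * (2*a + b + s) / (a + b + s) with hxdef
  set y : ℝ := 2 * (a + b) * s / ((a + 2*b) * (2*a + b)) with hydef
  set z : ℝ := (a / (a + 2*b)) * (a + 2*b + s) / (a + b + s) with hzdef
  have hx0 : 0 ≤ x := by positivity
  have hy0 : 0 ≤ y := by positivity
  have hz0 : 0 ≤ z := by positivity
  have hx1 : x ≤ 1 := by
    rw [hxdef, div_le_one (by positivity), div_mul_eq_mul_div,
      div_le_iff₀ (by positivity)]
    nlinarith [mul_nonneg ha.le hs0]
  have hy1 : y ≤ 1 := by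
    rw [hydef, div_le_one (by positivity)]
    nlinarith [mul_nonneg (mul_nonneg (by positivity : (0:ℝ) ≤ 2*(a+b)) hs0)
      ((by positivity : (0:ℝ) < (a + 2*b) * (2*a + b)) ).le, sq_nonneg (a - b),
      sq_nonneg (2*(a+b)*s - (a + 2*b) * (2*a + b))]
  have hz1 : z ≤ 1 := by
    rw [hzdef, div_le_one (by positivity), div_mul_eq_mul_div,
      div_le_iff₀ (by positivity)]
    nlinarith [mul_nonneg hb.le hs0]
  have key : (1 - x ^ 2) * (1 - y ^ 2) = (z + x * y) ^ 2 := by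
    obtain ⟨r, hr0, hr2⟩ : ∃ r : ℝ, 0 < r ∧ r ^ 2 = 2 * a :=
      ⟨Real.sqrt (2*a), by positivity, Real.sq_sqrt (by positivity)⟩
    obtain ⟨q, hq0, hq2⟩ : ∃ q : ℝ, 0 < q ∧ q ^ 2 = b :=
      ⟨Real.sqrt b, by positivity, Real.sq_sqrt hb.le⟩
    have hs' : s = r * q := by
      rw [hs, show 2*a*b = (r*q)^2 by rw [mul_pow, hr2, hq2]]
      exact Real.sqrt_sq (by positivity)
    have ha' : a = r ^ 2 / 2 := by linarith
    have hb' : b = q ^ 2 := hq2.symm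
    rw [hxdef, hydef, hzdef, hs', ha', hb']
    have d1 : (2 * (r^2/2) + q^2) ≠ 0 := by positivity
    have d2 : (r^2/2 + q^2 + r*q) ≠ 0 := by positivity
    have d3 : (r^2/2 + 2*q^2) ≠ 0 := by positivity
    field_simp
    ring
  have hxys : Real.sqrt (1 - x ^ 2) * Real.sqrt (1 - y ^ 2) - x * y = z := by
    rw [← Real.sqrt_mul (by nlinarith : (0:ℝ) ≤ 1 - x ^ 2), key,
      Real.sqrt_sq (by positivity)]
    ring
  have hA0 : 0 ≤ Real.arcsin x := Real.arcsin_nonneg.mpr hx0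
  have hB0 : 0 ≤ Real.arcsin y := Real.arcsin_nonneg.mpr hy0
  have hC0 : 0 ≤ Real.arcsin z := Real.arcsin_nonneg.mpr hz0
  have hA1 : Real.arcsin x ≤ π/2 := Real.arcsin_le_pi_div_two x
  have hB1 : Real.arcsin y ≤ π/2 := Real.arcsin_le_pi_div_two y
  have hC1 : Real.arcsin z ≤ π/2 := Real.arcsin_le_pi_div_two z
  have hcos : Real.cos (Real.arcsin x + Real.arcsin y)
      = Real.cos (π/2 - Real.arcsin z) := by
    rw [Real.cos_add, Real.cos_arcsin, Real.cos_arcsin,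
      Real.sin_arcsin (by linarith) hx1, Real.sin_arcsin (by linarith) hy1,
      Real.cos_pi_div_two_sub, Real.sin_arcsin (by linarith) hz1, hxys]
  have := Real.injOn_cos ⟨by linarith, by linarith⟩
    ⟨by linarith, by linarith [Real.pi_pos]⟩ hcos
  linarith
end
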